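/- There exists an SMC instance with binary valuations (U,V taking values in {0,1}) for which the set of stable fractional matchings is not convex. Concretely, for the 3×3 instance with U(m1,w2)=0,V(m1,w2)=1; U(m1,w3)=1,V(m1,w3)=0; U(m2,w1)=1,V(m2,w1)=0; U(m2,w2)=1,V(m2,w2)=1; U(m2,w3)=0,V(m2,w3)=1; U(m3,w1)=0,V(m3,w1)=1; U(m3,w2)=1,V(m3,w2)=0, and all other pairs valued 0 by both agents, the integral matchings μ1={(m1,w3),(m2,w1),(m3,w2)} and μ2={(m1,w2),(m2,w3),(m3,w1)} are both stable, but the fractional matching (1/2)μ1+(1/2)μ2 is not stable. -/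

import Mathlib

open Finset

/-- A fractional matching: nonnegative weights with row and column sums at most 1. -/
def IsFrac {n : ℕ} (μ : Fin n → Fin n → ℝ) : Prop :=
  (∀ m w, 0 ≤ μ m w) ∧ (∀ m, ∑ w, μ m w ≤ 1) ∧ (∀ w, ∑ m, μ m w ≤ 1)

/-- An integral matching takes values in {0,1}. -/
def IsIntegralM {n : ℕ} (μ : Fin n → Fin n → ℝ) : Prop :=
  ∀ m w, μ m w = 0 ∨ μ m w = 1

/-- A complete (perfect) matching: all row and column sums equal 1. -/
def IsPerfect {n : ℕ} (μ : Fin n → Fin n → ℝ) : Prop :=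
  (∀ m, ∑ w, μ m w = 1) ∧ (∀ w, ∑ m, μ m w = 1)

/-- Utility of man `m` under matching `μ`. -/
def uM {n : ℕ} (U μ : Fin n → Fin n → ℝ) (m : Fin n) : ℝ := ∑ w, U m w * μ m w

/-- Utility of woman `w` under matching `μ`. -/
def vW {n : ℕ} (V μ : Fin n → Fin n → ℝ) (w : Fin n) : ℝ := ∑ m, V m w * μ m w

/-- Stability: no blocking pair. -/
def IsStable {n : ℕ} (U V μ : Fin n → Fin n → ℝ) : Prop :=
  ∀ m w, U m w ≤ uM U μ m ∨ V m w ≤ vW V μ w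

/-- Social welfare. -/
def welfare {n : ℕ} (U V μ : Fin n → Fin n → ℝ) : ℝ :=
  (∑ m, uM U μ m) + (∑ w, vW V μ w)

def U1 : Fin 3 → Fin 3 → ℝ := ![![0,0,1],![1,1,0],![0,1,0]]
def V1 : Fin 3 → Fin 3 → ℝ := ![![0,1,0],![0,1,1],![1,0,0]]
def mu11 : Fin 3 → Fin 3 → ℝ := ![![0,0,1],![1,0,0],![0,1,0]]
def mu12 : Fin 3 → Fin 3 → ℝ := ![![0,1,0],![0,0,1],![1,0,0]]

theorem stmt1 :
    (IsIntegralM mu11 ∧ IsPerfect mu11 ∧ IsStable U1 V1 mu11) ∧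
    (IsIntegralM mu12 ∧ IsPerfect mu12 ∧ IsStable U1 V1 mu12) ∧
    ¬ IsStable U1 V1 (fun m w => (1/2) * mu11 m w + (1/2) * mu12 m w) := by
  refine ⟨⟨?_, ⟨?_, ?_⟩, ?_⟩, ⟨?_, ⟨?_, ?_⟩, ?_⟩, ?_⟩
  · intro m w; fin_cases m <;> fin_cases w <;> norm_num [mu11, Matrix.vecHead, Matrix.vecTail]
  · intro m; fin_cases m <;> norm_num [mu11, Fin.sum_univ_three, Matrix.vecHead, Matrix.vecTail, Matrix.cons_val_two]
  · intro w; fin_cases w <;> norm_num [mu11, Fin.sum_univ_three, Matrix.vecHead, Matrix.vecTail, Matrix.cons_val_two]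
  · intro m w; fin_cases m <;> fin_cases w <;>
      simp [U1, V1, mu11, uM, vW, Fin.sum_univ_three] <;> norm_num
  · intro m w; fin_cases m <;> fin_cases w <;> norm_num [mu12, Matrix.vecHead, Matrix.vecTail]
  · intro m; fin_cases m <;> norm_num [mu12, Fin.sum_univ_three, Matrix.vecHead, Matrix.vecTail, Matrix.cons_val_two]
  · intro w; fin_cases w <;> norm_num [mu12, Fin.sum_univ_three, Matrix.vecHead, Matrix.vecTail, Matrix.cons_val_two]
  · intro m w; fin_cases m <;> fin_cases w <;>
      simp [U1, V1, mu12, uM, vW, Fin.sum_univ_three] <;> norm_num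
  · intro h
    have := h 1 1
    simp [U1, V1, mu11, mu12, uM, vW, Fin.sum_univ_three] at this
    norm_num at this
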